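/- Let A be a 3×3 real matrix, let 0 < q < 1 and κ ∈ ℝ. Suppose: (i) det A = q^{−3κ}; (ii) q^{1−2κ} is a root of the characteristic polynomial of adjugate(A); (iii) every complex root λ of the characteristic polynomial of A (viewed over ℂ) satisfies |λ| > 1. Then κ > 1/2. -/

import Mathlib

open Matrix Polynomial

lemma eval_charpoly_aux (M : Matrix (Fin 3) (Fin 3) ℝ) (t : ℝ) :
    (Matrix.charpoly M).eval t = (t • (1 : Matrix (Fin 3) (Fin 3) ℝ) - M).det := by
  rw [Matrix.charpoly, ← Polynomial.coe_evalRingHom, RingHom.map_det]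
  congr 1
  ext i j
  by_cases h : i = j
  · subst h
    simp [Matrix.charmatrix_apply_eq, Matrix.one_apply]
  · simp [Matrix.charmatrix_apply_ne M i j h, Matrix.one_apply, h]

/-- Lower bound for the self-similarity exponent: if `A` is a real 3×3 matrix
with `det A = q^(−3κ)` (`0 < q < 1`), `q^(1−2κ)` a root of the characteristic
polynomial of `adjugate A`, and all complex eigenvalues of `A` of modulus
`> 1`, then `κ > 1/2`. -/
theorem stmt6 (A : Matrix (Fin 3) (Fin 3) ℝ) (q κ : ℝ) (hq0 : 0 < q) (hq1 : q < 1)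
    (hdet : A.det = q ^ (-(3 : ℝ) * κ))
    (hadj : (Matrix.charpoly A.adjugate).IsRoot (q ^ ((1 : ℝ) - 2 * κ)))
    (hrep : ∀ μ : ℂ, ((Matrix.charpoly A).map (algebraMap ℝ ℂ)).IsRoot μ →
      1 < ‖μ‖) :
    κ > 1 / 2 := by
  set μ : ℝ := q ^ ((1 : ℝ) - 2 * κ) with hμ
  have hμpos : 0 < μ := Real.rpow_pos_of_pos hq0 _
  have hdetpos : 0 < A.det := hdet ▸ Real.rpow_pos_of_pos hq0 _
  -- extract an eigenvector for the adjugate with eigenvalue μ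
  have hdet0 : (μ • (1 : Matrix (Fin 3) (Fin 3) ℝ) - A.adjugate).det = 0 := by
    rw [← eval_charpoly_aux]; exact hadj
  obtain ⟨v, hv0, hv⟩ := (Matrix.exists_mulVec_eq_zero_iff).mpr hdet0
  have hadjv : A.adjugate.mulVec v = μ • v := by
    have := hv
    rw [Matrix.sub_mulVec, sub_eq_zero] at this
    rw [← this, Matrix.smul_mulVec, Matrix.one_mulVec]
  -- hence λ₀ = det A / μ is an eigenvalue of A
  set lam : ℝ := A.det / μ with hlam
  have hAv : A.mulVec v = lam • v := by
    have h1 : A.mulVec (A.adjugate.mulVec v) = A.det • v := by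
      rw [Matrix.mulVec_mulVec, Matrix.mul_adjugate, Matrix.smul_mulVec,
        Matrix.one_mulVec]
    rw [hadjv, Matrix.mulVec_smul] at h1
    have : μ⁻¹ • (μ • A.mulVec v) = μ⁻¹ • (A.det • v) := by rw [h1]
    rwa [smul_smul, inv_mul_cancel₀ hμpos.ne', one_smul, smul_smul,
      ← div_eq_inv_mul] at this
  have hlamroot : (Matrix.charpoly A).IsRoot lam := by
    have : (lam • (1 : Matrix (Fin 3) (Fin 3) ℝ) - A).mulVec v = 0 := by
      rw [Matrix.sub_mulVec, Matrix.smul_mulVec, Matrix.one_mulVec, hAv, sub_self]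
    have hd : (lam • (1 : Matrix (Fin 3) (Fin 3) ℝ) - A).det = 0 :=
      (Matrix.exists_mulVec_eq_zero_iff).mp ⟨v, hv0, this⟩
    rw [Polynomial.IsRoot, eval_charpoly_aux, hd]
  -- pass to ℂ
  set p : Polynomial ℂ := (Matrix.charpoly A).map (algebraMap ℝ ℂ) with hp
  set B : Matrix (Fin 3) (Fin 3) ℂ := A.map (algebraMap ℝ ℂ) with hB
  have hpB : p = Matrix.charpoly B := (Matrix.charpoly_map A (algebraMap ℝ ℂ)).symm
  have hpmonic : p.Monic := (Matrix.charpoly_monic A).map _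
  have hp0 : p ≠ 0 := hpmonic.ne_zero
  have hsplits : p.Splits := IsAlgClosed.splits p
  have hdegp : p.natDegree = 3 := by
    rw [hpB, Matrix.charpoly_natDegree_eq_dim, Fintype.card_fin]
  have hcard : Multiset.card p.roots = 3 := by
    rw [← hdegp]
    exact Polynomial.splits_iff_card_roots.mp hsplits
  have hdetB : (A.det : ℂ) = p.roots.prod := by
    have := Matrix.det_eq_prod_roots_charpoly_of_splits
      (B := B) (by rwa [← hpB])
    rw [← hpB] at this
    rw [← this, hB]
    exact (algebraMap ℝ ℂ).map_det A
  have hlammem : (lam : ℂ) ∈ p.roots := by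
    rw [Polynomial.mem_roots hp0, hp]
    exact hlamroot.map
  -- the product of the other two roots is μ
  have hlamne : (lam : ℂ) ≠ 0 := by
    simp only [ne_eq, Complex.ofReal_eq_zero]
    exact (div_pos hdetpos hμpos).ne'
  have hprod_erase : (p.roots.erase (lam : ℂ)).prod = (μ : ℂ) := by
    have hμne : ((μ : ℝ) : ℂ) ≠ 0 := by exact_mod_cast hμpos.ne'
    have hdetne : ((A.det : ℝ) : ℂ) ≠ 0 := by exact_mod_cast hdetpos.ne'
    have hlamval : ((lam : ℝ) : ℂ) = (A.det : ℂ) / (μ : ℂ) := by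
      rw [hlam]; push_cast; ring
    have h1 : ((lam : ℝ) : ℂ) * (p.roots.erase (lam : ℂ)).prod = (A.det : ℂ) := by
      rw [Multiset.prod_erase hlammem, ← hdetB]
    have h2 : (p.roots.erase (lam : ℂ)).prod = (A.det : ℂ) / ((lam : ℝ) : ℂ) :=
      (eq_div_iff hlamne).mpr (by rw [mul_comm]; exact h1)
    rw [h2, hlamval]
    field_simp
  have hcard_erase : Multiset.card (p.roots.erase (lam : ℂ)) = 2 := by
    rw [Multiset.card_erase_of_mem hlammem, hcard]; rfl
  obtain ⟨a, b, hab⟩ := Multiset.card_eq_two.mp hcard_erase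
  have hamem : a ∈ p.roots := Multiset.mem_of_mem_erase (by rw [hab]; simp)
  have hbmem : b ∈ p.roots := Multiset.mem_of_mem_erase (by rw [hab]; simp)
  have ha1 : 1 < ‖a‖ := hrep a (Polynomial.isRoot_of_mem_roots hamem)
  have hb1 : 1 < ‖b‖ := hrep b (Polynomial.isRoot_of_mem_roots hbmem)
  have habs : ‖((μ : ℝ) : ℂ)‖ = μ := by
    rw [Complex.norm_real, Real.norm_eq_abs, abs_of_pos hμpos]
  have hμ1 : 1 < μ := by
    have : ((μ : ℝ) : ℂ) = a * b := by rw [← hprod_erase, hab]; simp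
    calc 1 < ‖a‖ * ‖b‖ :=
          one_lt_mul_of_lt_of_le ha1 hb1.le
      _ = ‖((μ : ℝ) : ℂ)‖ := by rw [this]; exact (norm_mul a b).symm
      _ = μ := habs
  -- conclude
  have hexp : (1 : ℝ) - 2 * κ < 0 := by
    by_contra h
    push_neg at h
    have : μ ≤ 1 := Real.rpow_le_one hq0.le hq1.le h
    linarith
  linarith
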